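/- arXiv:1711.02665 — 2 statements merged into one kernel-verified Lean document; each statement's English description precedes it below -/
import Mathlib

section
/- For all x ≥ 4, the sum over primes p ≤ x/2 of π(x/p) is at least (x/log x)·log log x + O(x/log x), where π is the prime counting function. -/
open Finset Real
set_option maxHeartbeats 1600000

lemma pi_card (n : ℕ) :
    Nat.primeCounting n = ((Finset.range (n+1)).filter Nat.Prime).card := by
  rw [Nat.primeCounting, Nat.primeCounting', Nat.count_eq_card_filter_range]

lemma centralBinom_le (k n : ℕ) (hk : 1 ≤ k) (h2k : 2 * k ≤ n) :
    Nat.centralBinom k ≤ n ^ Nat.primeCounting n := by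
  have hcb : Nat.centralBinom k ≠ 0 := (Nat.centralBinom_pos k).ne'
  conv_lhs => rw [← Nat.factorization_prod_pow_eq_self hcb]
  rw [Nat.prod_factorization_eq_prod_primeFactors]
  calc ∏ p ∈ (Nat.centralBinom k).primeFactors, p ^ (Nat.centralBinom k).factorization p
      ≤ ∏ p ∈ (Nat.centralBinom k).primeFactors, n := by
        apply Finset.prod_le_prod' -- nat version?
        intro p hp
        calc p ^ (Nat.centralBinom k).factorization p ≤ 2 * k :=
              Nat.pow_factorization_choose_le (by positivity)
          _ ≤ n := h2k
    _ = n ^ (Nat.centralBinom k).primeFactors.card := Finset.prod_const n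
    _ ≤ n ^ Nat.primeCounting n := by
        apply Nat.pow_le_pow_right (by omega)
        rw [pi_card]
        apply Finset.card_le_card
        intro p hp
        have hpp := Nat.prime_of_mem_primeFactors hp
        have hdvd := Nat.dvd_of_mem_primeFactors hp
        have hple : p ≤ 2 * k := by
          have : p ^ (Nat.centralBinom k).factorization p ≤ 2 * k :=
            Nat.pow_factorization_choose_le (by positivity)
          have h1 : 1 ≤ (Nat.centralBinom k).factorization p :=
            (Nat.Prime.factorization_pos_of_dvd hpp hcb hdvd)
          calc p ≤ p ^ (Nat.centralBinom k).factorization p :=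
                Nat.le_self_pow (by omega) p
            _ ≤ 2 * k := this
        simp only [Finset.mem_filter, Finset.mem_range]
        exact ⟨by omega, hpp⟩

lemma cheb_lower (n : ℕ) (hn : 2 ≤ n) :
    Real.log 2 * ((n : ℝ) - 1) - Real.log (n + 1)
      ≤ (Nat.primeCounting n : ℝ) * Real.log n := by
  set k := n / 2 with hk
  have hk1 : 1 ≤ k := (Nat.one_le_div_iff (by norm_num)).mpr hn
  have h2k : 2 * k ≤ n := by
    have := Nat.div_mul_le_self n 2; omega
  have key : (4:ℕ) ^ k ≤ (n + 1) * n ^ Nat.primeCounting n := by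
    calc (4:ℕ) ^ k ≤ (2 * k + 1) * Nat.centralBinom k :=
          Nat.four_pow_le_two_mul_add_one_mul_central_binom k
      _ ≤ (n + 1) * n ^ Nat.primeCounting n :=
          Nat.mul_le_mul (by omega) (centralBinom_le k n hk1 h2k)
  have keyR : ((4:ℝ)) ^ k ≤ ((n:ℝ) + 1) * (n:ℝ) ^ Nat.primeCounting n := by
    exact_mod_cast key
  have hlog : (k:ℝ) * Real.log 4 ≤ Real.log ((n:ℝ)+1) + (Nat.primeCounting n : ℝ) * Real.log n := by
    have h1 : Real.log ((4:ℝ)^k) ≤ Real.log (((n:ℝ) + 1) * (n:ℝ) ^ Nat.primeCounting n) :=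
      Real.log_le_log (by positivity) keyR
    rw [Real.log_pow, Real.log_mul (by positivity) (by positivity), Real.log_pow] at h1
    exact h1
  have h4 : Real.log 4 = 2 * Real.log 2 := by
    rw [show (4:ℝ) = 2^2 by norm_num, Real.log_pow]; push_cast; ring
  have hnk : (n:ℝ) - 1 ≤ 2 * (k:ℝ) := by
    have : n - 1 ≤ 2 * k := by omega
    have := (Nat.cast_le (α := ℝ)).mpr this
    push_cast at this
    have hn1 : (1:ℝ) ≤ (n:ℝ) := by exact_mod_cast (by omega : 1 ≤ n)
    rw [Nat.cast_sub (by omega)] at *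
    · push_cast at this ⊢; linarith
  calc Real.log 2 * ((n : ℝ) - 1) - Real.log (n + 1)
      ≤ Real.log 2 * (2 * k) - Real.log (n+1) := by
        have h2 : (0:ℝ) ≤ Real.log 2 := Real.log_nonneg (by norm_num)
        nlinarith
    _ = (k:ℝ) * Real.log 4 - Real.log (n+1) := by rw [h4]; ring
    _ ≤ (Nat.primeCounting n : ℝ) * Real.log n := by
        push_cast at hlog ⊢; linarith

lemma sq_sum_le : ∀ m : ℕ, 1 ≤ m → ∑ k ∈ Finset.Icc 1 m, (1:ℝ)/(k:ℝ)^2 ≤ 2 - 1/m := by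
  intro m hm
  induction m, hm using Nat.le_induction with
  | base => norm_num
  | succ n hn ih =>
    rw [Finset.sum_Icc_succ_top (by omega)]
    have h1 : (0:ℝ) < n := by exact_mod_cast hn
    have h2 : (0:ℝ) < (n:ℝ) + 1 := by linarith
    have key : (1:ℝ)/((n:ℝ)+1)^2 ≤ 1/n - 1/(n+1) := by
      rw [div_sub_div _ _ (ne_of_gt h1) (ne_of_gt h2)]
      rw [div_le_div_iff₀ (by positivity) (by positivity)]
      ring_nf
      nlinarith
    push_cast
    linarith

lemma harmonic_le_prod (m : ℕ) (hm : 1 ≤ m) :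
    ((harmonic m : ℚ) : ℝ) ≤ (∏ p ∈ (m+1).primesBelow, ((1:ℝ)/p + 1)) * 2 := by
  classical
  set B : Finset (Finset ℕ × ℕ) := (m+1).primesBelow.powerset ×ˢ Finset.Icc 1 m with hB
  set g : Finset ℕ × ℕ → ℝ := fun y => (∏ p ∈ y.1, (1:ℝ)/p) * ((1:ℝ)/(y.2:ℝ)^2) with hg
  have hgnn : ∀ y ∈ B, 0 ≤ g y := by
    intro y _
    apply mul_nonneg (Finset.prod_nonneg fun p _ => by positivity) (by positivity)
  have H : ∀ n ∈ Finset.Icc 1 m, ∃ y : Finset ℕ × ℕ, y ∈ B ∧ n = y.2 ^ 2 * y.1.prod id := by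
    intro n hn
    rw [Finset.mem_Icc] at hn
    have hsm : n ∈ Nat.smoothNumbers (m+1) :=
      Nat.mem_smoothNumbers_of_lt (by omega) (by omega)
    obtain ⟨s, hs, k, hk⟩ := Nat.eq_prod_primes_mul_sq_of_mem_smoothNumbers hsm
    have hsp : 0 < s.prod id := by
      apply Finset.prod_pos
      intro p hp
      exact (Nat.prime_of_mem_primesBelow (Finset.mem_powerset.mp hs hp)).pos
    have hk1 : 1 ≤ k := by
      rcases Nat.eq_zero_or_pos k with h | h
      · subst h; simp at hk; omega
      · exact h
    have hkm : k ≤ m := by nlinarith [hk, hn.2]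
    exact ⟨(s, k), by simp [hB, Finset.mem_product, hs, Finset.mem_Icc, hk1, hkm], hk⟩
  set φ : ℕ → Finset ℕ × ℕ := fun n =>
    if h : n ∈ Finset.Icc 1 m then (H n h).choose else (∅, 1) with hφdef
  have hφ : ∀ n ∈ Finset.Icc 1 m, φ n ∈ B ∧ n = (φ n).2 ^ 2 * (φ n).1.prod id := by
    intro n h
    simp only [hφdef, dif_pos h]
    exact (H n h).choose_spec
  have hinj : ∀ a ∈ Finset.Icc 1 m, ∀ b ∈ Finset.Icc 1 m, φ a = φ b → a = b := by
    intro a ha b hb hab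
    rw [(hφ a ha).2, (hφ b hb).2, hab]
  have hterm : ∀ n ∈ Finset.Icc 1 m, (n:ℝ)⁻¹ = g (φ n) := by
    intro n hn
    obtain ⟨hmem, heq⟩ := hφ n hn
    have hpos : ∀ p ∈ (φ n).1, (0:ℝ) < p := by
      intro p hp
      rw [hB, Finset.mem_product] at hmem
      exact_mod_cast (Nat.prime_of_mem_primesBelow (Finset.mem_powerset.mp hmem.1 hp)).pos
    rw [hg]
    simp only [one_div]
    rw [Finset.prod_inv_distrib, ← mul_inv]
    conv_lhs => rw [heq]
    push_cast [id_eq]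
    ring
  calc ((harmonic m : ℚ) : ℝ) = ∑ n ∈ Finset.Icc 1 m, (n:ℝ)⁻¹ := by
        rw [harmonic_eq_sum_Icc]; push_cast; rfl
    _ = ∑ n ∈ Finset.Icc 1 m, g (φ n) := Finset.sum_congr rfl hterm
    _ = ∑ y ∈ (Finset.Icc 1 m).image φ, g y := (Finset.sum_image hinj).symm
    _ ≤ ∑ y ∈ B, g y := by
        apply Finset.sum_le_sum_of_subset_of_nonneg
        · intro y hy
          obtain ⟨n, hn, rfl⟩ := Finset.mem_image.mp hy
          exact (hφ n hn).1
        · intro y hy _; exact hgnn y hy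
    _ = (∑ s ∈ (m+1).primesBelow.powerset, ∏ p ∈ s, (1:ℝ)/p)
          * (∑ k ∈ Finset.Icc 1 m, (1:ℝ)/(k:ℝ)^2) := by
        rw [hB, hg, Finset.sum_product]
        rw [Finset.sum_mul_sum]
    _ ≤ (∑ s ∈ (m+1).primesBelow.powerset, ∏ p ∈ s, (1:ℝ)/p) * 2 := by
        apply mul_le_mul_of_nonneg_left
        · have := sq_sum_le m hm
          have : (0:ℝ) < m := by exact_mod_cast hm
          linarith [sq_sum_le m hm, one_div_pos.mpr this]
        · apply Finset.sum_nonneg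
          intro s _
          exact Finset.prod_nonneg fun p _ => by positivity
    _ = (∏ p ∈ (m+1).primesBelow, ((1:ℝ)/p + 1)) * 2 := by
        rw [Finset.prod_add]
        simp

lemma mertens_lower (m : ℕ) (hm : 2 ≤ m) :
    Real.log (Real.log m) - Real.log 2 ≤ ∑ p ∈ (m+1).primesBelow, (1:ℝ)/p := by
  set S := ∑ p ∈ (m+1).primesBelow, (1:ℝ)/p with hS
  have h1 : Real.log m ≤ ((harmonic m : ℚ) : ℝ) := by
    calc Real.log m ≤ Real.log ((m:ℝ)+1) := by
          apply Real.log_le_log (by positivity); linarith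
      _ ≤ ((harmonic m : ℚ) : ℝ) := by exact_mod_cast log_add_one_le_harmonic m
  have h2 : (∏ p ∈ (m+1).primesBelow, ((1:ℝ)/p + 1)) ≤ Real.exp S := by
    rw [hS, Real.exp_sum]
    apply Finset.prod_le_prod
    · intro p hp
      have : (0:ℝ) < p := by exact_mod_cast (Nat.prime_of_mem_primesBelow hp).pos
      positivity
    · intro p _
      linarith [Real.add_one_le_exp ((1:ℝ)/p)]
  have hhp := harmonic_le_prod m (by omega)
  have h3 : Real.log m ≤ Real.exp S * 2 := by linarith
  have hlm : 0 < Real.log m := by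
    apply Real.log_pos; exact_mod_cast by omega
  have := Real.log_le_log hlm h3
  rw [Real.log_mul (by positivity) (by norm_num), Real.log_exp] at this
  linarith

theorem stmt1 : ∃ C : ℝ, 0 < C ∧ ∀ x : ℝ, 4 ≤ x →
    ((∑ p ∈ (Finset.Icc 1 ⌊x / 2⌋₊).filter Nat.Prime,
        (Nat.primeCounting ⌊x / (p : ℝ)⌋₊ : ℝ)) ≥
      (x / Real.log x) * Real.log (Real.log x) - C * (x / Real.log x)) := by
  refine ⟨100, by norm_num, fun x hx => ?_⟩
  have hx0 : (0:ℝ) < x := by linarith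
  set L := Real.log x with hL
  have hL0 : 0 < L := Real.log_pos (by linarith)
  have hlog2 : (0.6931471803:ℝ) < Real.log 2 := Real.log_two_gt_d9
  have hlog2' : Real.log 2 < 0.6931471808 := Real.log_two_lt_d9
  have hsum_nn : (0:ℝ) ≤ ∑ p ∈ (Finset.Icc 1 ⌊x / 2⌋₊).filter Nat.Prime,
      (Nat.primeCounting ⌊x / (p : ℝ)⌋₊ : ℝ) :=
    Finset.sum_nonneg fun p _ => by positivity
  rcases lt_or_ge x 4096 with hxs | hxb
  · have hLlt : L < 9 := by
      rw [hL]
      calc Real.log x < Real.log 4096 := Real.log_lt_log hx0 hxs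
        _ < 9 := by
            rw [show (4096:ℝ) = 2^12 by norm_num, Real.log_pow]
            push_cast
            nlinarith
    have hlogL : Real.log L ≤ 100 := by
      calc Real.log L ≤ L - 1 := Real.log_le_sub_one_of_pos hL0
        _ ≤ 100 := by linarith
    have : (x / L) * Real.log L - 100 * (x / L) ≤ 0 := by
      have hxL : 0 ≤ x / L := by positivity
      nlinarith
    linarith [hsum_nn]
  · set z := Real.sqrt (Real.sqrt x) with hzdef
    have hsx0 : (0:ℝ) ≤ Real.sqrt x := Real.sqrt_nonneg x
    have hz0 : (0:ℝ) ≤ z := Real.sqrt_nonneg _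
    have hz2 : z^2 = Real.sqrt x := Real.sq_sqrt hsx0
    have hsx2 : (Real.sqrt x)^2 = x := Real.sq_sqrt hx0.le
    have hz4 : z^4 = x := by nlinarith
    have hz8 : (8:ℝ) ≤ z := by
      rw [hzdef]
      rw [show (8:ℝ) = Real.sqrt 64 by
        rw [show (64:ℝ) = 8^2 by norm_num, Real.sqrt_sq (by norm_num)]]
      apply Real.sqrt_le_sqrt
      rw [show (64:ℝ) = Real.sqrt 4096 by
        rw [show (4096:ℝ) = 64^2 by norm_num, Real.sqrt_sq (by norm_num)]]
      exact Real.sqrt_le_sqrt hxb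
    have hL8 : (8:ℝ) ≤ L := by
      have h1 : Real.log 4096 ≤ L := Real.log_le_log (by norm_num) hxb
      rw [show (4096:ℝ) = 2^12 by norm_num, Real.log_pow] at h1
      push_cast at h1
      nlinarith
    have hlogz : Real.log z = L / 4 := by
      rw [hzdef, Real.log_sqrt hsx0, Real.log_sqrt hx0.le, hL]; ring
    set m := ⌊z⌋₊ with hmdef
    have hm8 : 8 ≤ m := Nat.le_floor (by exact_mod_cast hz8)
    have hmz : (m:ℝ) ≤ z := Nat.floor_le hz0
    have hzm1 : z ≤ (m:ℝ) + 1 := (Nat.lt_floor_add_one z).le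
    set n2 := ⌊x / 2⌋₊ with hn2def
    set T := (Finset.Icc 1 n2).filter Nat.Prime with hTdef
    set P := (m+1).primesBelow with hPdef
    have hz3 : (512:ℝ) ≤ z^3 := by nlinarith
    have hzx2 : z ≤ x / 2 := by nlinarith
    have hxz : x / z = z^3 := by
      rw [div_eq_iff (by nlinarith : z ≠ 0)]
      nlinarith
    have hPT : P ⊆ T := by
      intro p hp
      rw [hPdef, Nat.mem_primesBelow] at hp
      obtain ⟨hplt, hpp⟩ := hp
      have hpm : p ≤ m := by omega
      refine Finset.mem_filter.mpr ⟨Finset.mem_Icc.mpr ⟨hpp.one_lt.le, ?_⟩, hpp⟩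
      apply Nat.le_floor
      have : (p:ℝ) ≤ (m:ℝ) := by exact_mod_cast hpm
      linarith
    -- Chebyshev bound for each p ∈ P
    have hcheb : ∀ p ∈ P, Real.log 2 * (x / p) / L - 4 ≤ (Nat.primeCounting ⌊x/(p:ℝ)⌋₊ : ℝ) := by
      intro p hp
      have hpp := Nat.prime_of_mem_primesBelow hp
      have hp2 : (2:ℝ) ≤ p := by exact_mod_cast hpp.two_le
      have hp0 : (0:ℝ) < p := by linarith
      have hpm : p ≤ m := by have := Nat.lt_of_mem_primesBelow hp; omega
      have hpz : (p:ℝ) ≤ z := le_trans (by exact_mod_cast hpm) hmz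
      have hY1 : x / z ≤ x / p := by
        apply div_le_div_of_nonneg_left hx0.le hp0 hpz
      have hY2 : (2:ℝ) ≤ x / p := by
        rw [hxz] at hY1; nlinarith
      have hY3 : x / p ≤ x / 2 := by
        apply div_le_div_of_nonneg_left hx0.le (by norm_num) hp2
      set y := ⌊x / (p:ℝ)⌋₊ with hydef
      have hy2 : 2 ≤ y := Nat.le_floor (by exact_mod_cast hY2)
      have hyY : (y:ℝ) ≤ x / p := Nat.floor_le (by positivity)
      have hYy1 : x / p < (y:ℝ) + 1 := Nat.lt_floor_add_one _
      have hcl := cheb_lower y hy2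
      have hyx : (y:ℝ) ≤ x := by linarith
      have hy0 : (0:ℝ) < y := by exact_mod_cast (by omega : 0 < y)
      have hlogy : Real.log y ≤ L := Real.log_le_log hy0 hyx
      have hpi0 : (0:ℝ) ≤ (Nat.primeCounting y : ℝ) := Nat.cast_nonneg _
      have key : Real.log 2 * ((y:ℝ) - 1) - Real.log ((y:ℝ)+1)
          ≤ (Nat.primeCounting y : ℝ) * L := by
        refine le_trans hcl ?_
        nlinarith
      have hy1x : Real.log ((y:ℝ)+1) ≤ Real.log 2 + L := by
        rw [← Real.log_mul (by norm_num) (ne_of_gt hx0)]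
        apply Real.log_le_log (by positivity)
        linarith
      have hlg2 : (0:ℝ) < Real.log 2 := by linarith
      have hA : Real.log 2 * (x/p) - 3 - L ≤ (Nat.primeCounting y : ℝ) * L := by
        nlinarith
      rw [sub_le_iff_le_add, div_le_iff₀ hL0]
      nlinarith
    have hPcard : (P.card : ℝ) ≤ z + 1 := by
      have h1 : P.card ≤ m + 1 := by
        calc P.card ≤ (Finset.range (m+1)).card := Finset.card_le_card (by
              intro q hq; exact Finset.mem_range.mpr (Nat.lt_of_mem_primesBelow hq))
          _ = m + 1 := Finset.card_range _
      calc (P.card : ℝ) ≤ (m:ℝ) + 1 := by exact_mod_cast h1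
        _ ≤ z + 1 := by linarith
    have hpim : (Nat.primeCounting m : ℝ) ≤ z + 1 := by
      have h1 : Nat.primeCounting m ≤ m + 1 := by
        rw [pi_card]
        calc _ ≤ (Finset.range (m+1)).card := Finset.card_le_card (Finset.filter_subset _ _)
          _ = m + 1 := Finset.card_range _
      calc (Nat.primeCounting m : ℝ) ≤ (m:ℝ) + 1 := by exact_mod_cast h1
        _ ≤ z + 1 := by linarith
    have hmertens : Real.log L - 3 ≤ ∑ p ∈ P, (1:ℝ)/p := by
      have hml := mertens_lower m (by omega)
      have hm0 : (0:ℝ) < m := by exact_mod_cast (by omega : 0 < m)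
      have hzm2 : z / 2 ≤ (m:ℝ) := by
        have : (1:ℝ) ≤ m := by exact_mod_cast (by omega : 1 ≤ m)
        linarith
      have hlm : L / 8 ≤ Real.log m := by
        have h1 : Real.log (z/2) ≤ Real.log m := Real.log_le_log (by linarith) hzm2
        rw [Real.log_div (by linarith) (by norm_num), hlogz] at h1
        nlinarith
      have h2 : Real.log (L/8) ≤ Real.log (Real.log m) :=
        Real.log_le_log (by positivity) hlm
      rw [Real.log_div (ne_of_gt hL0) (by norm_num)] at h2
      have h8 : Real.log 8 = 3 * Real.log 2 := by
        rw [show (8:ℝ) = 2^3 by norm_num, Real.log_pow]; push_cast; ring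
      rw [hPdef] at *
      nlinarith [hml, h2]
    have hsumP : (Real.log 2 * x / L) * (Real.log L - 3) - 4 * (z+1)
        ≤ ∑ p ∈ P, (Nat.primeCounting ⌊x/(p:ℝ)⌋₊ : ℝ) := by
      have heq : ∑ p ∈ P, (Real.log 2 * (x/p)/L - 4)
          = (Real.log 2 * x / L) * (∑ p ∈ P, (1:ℝ)/p) - 4 * P.card := by
        calc ∑ p ∈ P, (Real.log 2 * (x/p)/L - 4)
            = ∑ p ∈ P, ((Real.log 2 * x / L) * ((1:ℝ)/p) - 4) :=
              Finset.sum_congr rfl (fun p _ => by ring)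
          _ = (Real.log 2 * x / L) * (∑ p ∈ P, (1:ℝ)/p) - 4 * P.card := by
              rw [Finset.sum_sub_distrib, Finset.sum_const, nsmul_eq_mul, ← Finset.mul_sum]
              ring
      have h1 : (Real.log 2 * x / L) * (Real.log L - 3) - 4 * (z+1)
          ≤ (Real.log 2 * x / L) * (∑ p ∈ P, (1:ℝ)/p) - 4 * P.card := by
        have hc : (0:ℝ) ≤ Real.log 2 * x / L := by positivity
        nlinarith [hmertens, hPcard]
      calc (Real.log 2 * x / L) * (Real.log L - 3) - 4 * (z+1)
          ≤ (Real.log 2 * x / L) * (∑ p ∈ P, (1:ℝ)/p) - 4 * P.card := h1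
        _ = ∑ p ∈ P, (Real.log 2 * (x/p)/L - 4) := heq.symm
        _ ≤ ∑ p ∈ P, (Nat.primeCounting ⌊x/(p:ℝ)⌋₊ : ℝ) := Finset.sum_le_sum hcheb
    -- swap
    have hswap : (∑ p ∈ P, (Nat.primeCounting ⌊x/(p:ℝ)⌋₊ : ℝ)) - (z+1)*(z+1)
        ≤ ∑ p ∈ T \ P, (Nat.primeCounting ⌊x/(p:ℝ)⌋₊ : ℝ) := by
      have hstep1 : ∀ p ∈ T \ P,
          ((P.filter (fun q => q ≤ ⌊x/(p:ℝ)⌋₊)).card : ℝ)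
            ≤ (Nat.primeCounting ⌊x/(p:ℝ)⌋₊ : ℝ) := by
        intro p hp
        have : (P.filter (fun q => q ≤ ⌊x/(p:ℝ)⌋₊)).card ≤ Nat.primeCounting ⌊x/(p:ℝ)⌋₊ := by
          rw [pi_card]
          apply Finset.card_le_card
          intro q hq
          rw [Finset.mem_filter] at hq
          refine Finset.mem_filter.mpr ⟨Finset.mem_range.mpr (by omega),
            Nat.prime_of_mem_primesBelow hq.1⟩
        exact_mod_cast this
      have hswapnat : ∑ p ∈ T \ P, ((P.filter (fun q => q ≤ ⌊x/(p:ℝ)⌋₊)).card : ℝ)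
          = ∑ q ∈ P, (((T \ P).filter (fun p : ℕ => q ≤ ⌊x/(p:ℝ)⌋₊)).card : ℝ) := by
        push_cast [Finset.card_filter]
        exact Finset.sum_comm
      have hperq : ∀ q ∈ P, (Nat.primeCounting ⌊x/(q:ℝ)⌋₊ : ℝ) - (Nat.primeCounting m : ℝ)
          ≤ (((T \ P).filter (fun p : ℕ => q ≤ ⌊x/(p:ℝ)⌋₊)).card : ℝ) := by
        intro q hq
        have hqp := Nat.prime_of_mem_primesBelow hq
        have hq2 : (2:ℝ) ≤ q := by exact_mod_cast hqp.two_le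
        have hq0 : (0:ℝ) < q := by linarith
        have hqm : q ≤ m := by have := Nat.lt_of_mem_primesBelow hq; omega
        have hqz : (q:ℝ) ≤ z := le_trans (by exact_mod_cast hqm) hmz
        set M := ⌊x/(q:ℝ)⌋₊ with hMdef
        have hzxq : z ≤ x / q := by
          have h1 : x / z ≤ x / q := div_le_div_of_nonneg_left hx0.le hq0 hqz
          rw [hxz] at h1; nlinarith
        have hmM : m ≤ M := Nat.le_floor (by
          have : (m:ℝ) ≤ x / q := le_trans hmz hzxq
          exact_mod_cast this)
        have hdisj : Disjoint ((Finset.range (m+1)).filter Nat.Prime)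
            ((Finset.Ioc m M).filter Nat.Prime) := by
          rw [Finset.disjoint_left]
          intro a ha hb
          rw [Finset.mem_filter, Finset.mem_range] at ha
          rw [Finset.mem_filter, Finset.mem_Ioc] at hb
          omega
        have hdecomp : Nat.primeCounting M
            = Nat.primeCounting m + ((Finset.Ioc m M).filter Nat.Prime).card := by
          have hru : Finset.range (M+1) = Finset.range (m+1) ∪ Finset.Ioc m M := by
            ext a
            simp only [Finset.mem_union, Finset.mem_range, Finset.mem_Ioc]
            omega
          rw [pi_card, pi_card, hru, Finset.filter_union,
            Finset.card_union_of_disjoint hdisj]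
        have hsub : (Finset.Ioc m M).filter Nat.Prime
            ⊆ (T \ P).filter (fun p : ℕ => q ≤ ⌊x/(p:ℝ)⌋₊) := by
          intro p hp
          rw [Finset.mem_filter, Finset.mem_Ioc] at hp
          obtain ⟨⟨hmp, hpM⟩, hpp⟩ := hp
          have hpreal : (p:ℝ) ≤ x / q := by
            calc (p:ℝ) ≤ (M:ℝ) := by exact_mod_cast hpM
              _ ≤ x / q := Nat.floor_le (by positivity)
          have hp0 : (0:ℝ) < p := by exact_mod_cast hpp.pos
          have hpq : (p:ℝ) * q ≤ x := (le_div_iff₀ hq0).mp hpreal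
          have hqxp : (q:ℝ) ≤ x / p := (le_div_iff₀ hp0).mpr (by linarith [hpq])
          refine Finset.mem_filter.mpr ⟨Finset.mem_sdiff.mpr ⟨?_, ?_⟩,
            Nat.le_floor hqxp⟩
          · refine Finset.mem_filter.mpr ⟨Finset.mem_Icc.mpr ⟨hpp.one_lt.le, ?_⟩, hpp⟩
            apply Nat.le_floor
            have hq2' : x / q ≤ x / 2 := div_le_div_of_nonneg_left hx0.le (by norm_num) hq2
            linarith
          · intro hpP
            have := Nat.lt_of_mem_primesBelow hpP
            omega
        calc (Nat.primeCounting M : ℝ) - (Nat.primeCounting m : ℝ)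
            = (((Finset.Ioc m M).filter Nat.Prime).card : ℝ) := by
              rw [hdecomp]; push_cast; ring
          _ ≤ _ := by exact_mod_cast Finset.card_le_card hsub
      have hchain : (∑ p ∈ P, (Nat.primeCounting ⌊x/(p:ℝ)⌋₊ : ℝ))
            - (P.card : ℝ) * (Nat.primeCounting m : ℝ)
          ≤ ∑ p ∈ T \ P, (Nat.primeCounting ⌊x/(p:ℝ)⌋₊ : ℝ) := by
        calc (∑ p ∈ P, (Nat.primeCounting ⌊x/(p:ℝ)⌋₊ : ℝ))
              - (P.card : ℝ) * (Nat.primeCounting m : ℝ)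
            = ∑ q ∈ P, ((Nat.primeCounting ⌊x/(q:ℝ)⌋₊ : ℝ) - (Nat.primeCounting m : ℝ)) := by
              rw [Finset.sum_sub_distrib, Finset.sum_const, nsmul_eq_mul]
          _ ≤ ∑ q ∈ P, (((T \ P).filter (fun p : ℕ => q ≤ ⌊x/(p:ℝ)⌋₊)).card : ℝ) :=
              Finset.sum_le_sum hperq
          _ = ∑ p ∈ T \ P, ((P.filter (fun q => q ≤ ⌊x/(p:ℝ)⌋₊)).card : ℝ) := hswapnat.symm
          _ ≤ ∑ p ∈ T \ P, (Nat.primeCounting ⌊x/(p:ℝ)⌋₊ : ℝ) := Finset.sum_le_sum hstep1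
      have hPc0 : (0:ℝ) ≤ (P.card : ℝ) := Nat.cast_nonneg _
      have hpim0 : (0:ℝ) ≤ (Nat.primeCounting m : ℝ) := Nat.cast_nonneg _
      nlinarith [hchain, hPcard, hpim]
    have hsplit : ∑ p ∈ T, (Nat.primeCounting ⌊x/(p:ℝ)⌋₊ : ℝ)
        = (∑ p ∈ T \ P, (Nat.primeCounting ⌊x/(p:ℝ)⌋₊ : ℝ))
          + ∑ p ∈ P, (Nat.primeCounting ⌊x/(p:ℝ)⌋₊ : ℝ) :=
      (Finset.sum_sdiff hPT).symm
    have hzsx : z ≤ Real.sqrt x := by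
      rw [hzdef]
      apply Real.sqrt_le_sqrt
      nlinarith
    have hsxL : Real.sqrt x ≤ 2 * (x / L) := by
      have h1 : Real.log (Real.sqrt x) ≤ Real.sqrt x - 1 :=
        Real.log_le_sub_one_of_pos (by nlinarith)
      rw [Real.log_sqrt hx0.le] at h1
      rw [show (2:ℝ)*(x/L) = 2*x/L by ring, le_div_iff₀ hL0]
      nlinarith
    have hlogL0 : 0 ≤ Real.log L := Real.log_nonneg (by linarith)
    show _ ≥ _
    rw [hsplit]
    have hxLnn : (0:ℝ) ≤ x / L := by positivity
    have main : (x / L) * Real.log L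
        ≤ 2 * ((Real.log 2 * x / L) * (Real.log L - 3)) + 6 * (x/L) := by
      have h12 : (1:ℝ) ≤ 2 * Real.log 2 := by linarith
      have hh := mul_le_mul_of_nonneg_right h12 (mul_nonneg hxLnn hlogL0)
      have h1 : x / L * Real.log L ≤ 2 * Real.log 2 * (x / L) * Real.log L := by
        calc x / L * Real.log L = 1 * (x/L * Real.log L) := by ring
          _ ≤ 2*Real.log 2 * (x/L * Real.log L) := hh
          _ = 2 * Real.log 2 * (x / L) * Real.log L := by ring
      have heq : 2 * ((Real.log 2 * x / L) * (Real.log L - 3))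
          = 2 * Real.log 2 * (x/L) * Real.log L - 6 * Real.log 2 * (x/L) := by ring
      have hlt1 : Real.log 2 * (x/L) ≤ 1 * (x/L) :=
        mul_le_mul_of_nonneg_right (by linarith) hxLnn
      linarith
    have hjunk : 8 * (z+1) + (z+1)*(z+1) ≤ 60 * (x / L) := by
      have hz1 : z + 1 ≤ 2 * z := by linarith
      have hm1 : (z+1)*(z+1) ≤ (2*z)*(2*z) :=
        mul_le_mul hz1 hz1 (by linarith) (by linarith)
      have he : (2*z)*(2*z) = 4 * Real.sqrt x := by rw [← hz2]; ring
      have h2 : 8*(z+1) ≤ 16 * Real.sqrt x := by linarith [hzsx]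
      linarith [hsxL]
    linarith [hsumP, hswap]
end

section
/- If n is squarefree with exactly r ≥ 1 distinct prime factors p₁, …, p_r, then ∑_{d | n} Υ(d) = (r−1)·∑_{i=1}^r log p_i for r ≥ 2, and equals 0 for r = 1. -/
open Finset Real ArithmeticFunction

open scoped Classical in
noncomputable def Upsilon (n : ℕ) : ℝ :=
  if ∃ p : ℕ, p.Prime ∧ n = p ^ 2 then Real.log (Nat.sqrt n)
  else if ∃ p q : ℕ, p.Prime ∧ q.Prime ∧ p ≠ q ∧ n = p * q then Real.log n
  else 0

lemma upsilon_not_sq {d : ℕ} (hd : Squarefree d) : ¬ ∃ p : ℕ, p.Prime ∧ d = p ^ 2 := by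
  rintro ⟨p, hp, rfl⟩
  exact hp.not_isUnit (hd p (by rw [sq]))

lemma upsilon_card_two {d : ℕ} (hd : Squarefree d) (h2 : d.primeFactors.card = 2) :
    Upsilon d = Real.log d := by
  rw [Upsilon, if_neg (upsilon_not_sq hd), if_pos]
  obtain ⟨p, q, hpq, hset⟩ := Finset.card_eq_two.mp h2
  refine ⟨p, q, ?_, ?_, hpq, ?_⟩
  · exact Nat.prime_of_mem_primeFactors (by rw [hset]; simp)
  · exact Nat.prime_of_mem_primeFactors (by rw [hset]; simp)
  · rw [← Nat.prod_primeFactors_of_squarefree hd, hset,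
      Finset.prod_insert (by simpa using hpq), Finset.prod_singleton]

lemma upsilon_card_ne_two {d : ℕ} (hd : Squarefree d) (h2 : d.primeFactors.card ≠ 2) :
    Upsilon d = 0 := by
  rw [Upsilon, if_neg (upsilon_not_sq hd), if_neg]
  rintro ⟨p, q, hp, hq, hpq, rfl⟩
  apply h2
  rw [Nat.primeFactors_mul hp.ne_zero hq.ne_zero, hp.primeFactors, hq.primeFactors,
    Finset.card_union_of_disjoint (by simpa using hpq)]
  rfl

open scoped Classical in
lemma count_pairs {S : Finset ℕ} {p : ℕ} (hp : p ∈ S) :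
    ((S.powersetCard 2).filter (fun s => p ∈ s)).card = S.card - 1 := by
  rw [← Finset.card_erase_of_mem hp]
  symm
  apply Finset.card_bij (fun a _ => insert p {a})
  · intro a ha
    have hap : a ≠ p := Finset.ne_of_mem_erase ha
    rw [Finset.mem_filter, Finset.mem_powersetCard]
    refine ⟨⟨?_, ?_⟩, by simp⟩
    · intro x hx
      rcases Finset.mem_insert.mp hx with rfl | hx
      · exact hp
      · rw [Finset.mem_singleton.mp hx]; exact Finset.mem_of_mem_erase ha
    · rw [Finset.card_insert_of_notMem (by simpa using hap.symm), Finset.card_singleton]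
  · intro a ha b hb hab
    have hap : a ≠ p := Finset.ne_of_mem_erase ha
    have : a ∈ insert p ({b} : Finset ℕ) := hab ▸ (by simp : a ∈ insert p ({a} : Finset ℕ))
    rcases Finset.mem_insert.mp this with h | h
    · exact absurd h hap
    · exact Finset.mem_singleton.mp h
  · intro s hs
    rw [Finset.mem_filter, Finset.mem_powersetCard] at hs
    obtain ⟨⟨hsub, hc⟩, hps⟩ := hs
    obtain ⟨x, y, hxy, rfl⟩ := Finset.card_eq_two.mp hc
    rcases Finset.mem_insert.mp hps with rfl | h
    · refine ⟨y, Finset.mem_erase.mpr ⟨hxy.symm, hsub (by simp)⟩, rfl⟩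
    · rw [Finset.mem_singleton] at h
      subst h
      refine ⟨x, Finset.mem_erase.mpr ⟨hxy, hsub (by simp)⟩, ?_⟩
      rw [Finset.pair_comm]

theorem stmt14 (n r : ℕ) (hn : Squarefree n) (hr : 1 ≤ r)
    (hcard : n.primeFactors.card = r) :
    ∑ d ∈ n.divisors, Upsilon d =
      ((r : ℝ) - 1) * ∑ p ∈ n.primeFactors, Real.log p := by
  classical
  have h0 : n ≠ 0 := hn.ne_zero
  set S := n.primeFactors with hS
  have key : ∑ d ∈ n.divisors, Upsilon d = ∑ s ∈ S.powerset, Upsilon (∏ p ∈ s, p) := by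
    have hfil : n.divisors.filter Squarefree = n.divisors :=
      Finset.filter_true_of_mem fun d hd => hn.squarefree_of_dvd (Nat.dvd_of_mem_divisors hd)
    rw [← hfil, Nat.sum_divisors_filter_squarefree h0]
    apply Finset.sum_congr
    · congr 1
      rw [Nat.factors_eq]
      simp [hS]
    · intro s _
      congr 1
      rw [Finset.prod_eq_multiset_prod, Multiset.map_id']
  have hsub : ∀ s ∈ S.powerset, Squarefree (∏ p ∈ s, p) ∧ (∏ p ∈ s, p).primeFactors = s := by
    intro s hs
    rw [Finset.mem_powerset] at hs
    have hprime : ∀ p ∈ s, p.Prime := fun p hp => Nat.prime_of_mem_primeFactors (hs hp)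
    have hdvd : (∏ p ∈ s, p) ∣ n := by
      calc (∏ p ∈ s, p) ∣ ∏ p ∈ S, p := Finset.prod_dvd_prod_of_subset _ _ _ hs
      _ = n := Nat.prod_primeFactors_of_squarefree hn
    exact ⟨hn.squarefree_of_dvd hdvd, Nat.primeFactors_prod hprime⟩
  rw [key]
  have step2 : ∑ s ∈ S.powerset, Upsilon (∏ p ∈ s, p)
      = ∑ s ∈ S.powersetCard 2, ∑ p ∈ s, Real.log p := by
    rw [Finset.powersetCard_eq_filter, Finset.sum_filter]
    apply Finset.sum_congr rfl
    intro s hs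
    obtain ⟨hsq, hpf⟩ := hsub s hs
    by_cases h2 : s.card = 2
    · rw [if_pos h2, upsilon_card_two hsq (by rw [hpf]; exact h2)]
      rw [Nat.cast_prod, Real.log_prod]
      intro p hp
      exact_mod_cast (Nat.prime_of_mem_primeFactors ((Finset.mem_powerset.mp hs) hp)).ne_zero
    · rw [if_neg h2, upsilon_card_ne_two hsq (by rw [hpf]; exact h2)]
  rw [step2]
  have step3 : ∑ s ∈ S.powersetCard 2, ∑ p ∈ s, Real.log p
      = ∑ p ∈ S, ((S.card : ℝ) - 1) * Real.log p := by
    have inner : ∀ s ∈ S.powersetCard 2, ∑ p ∈ s, Real.log p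
        = ∑ p ∈ S, if p ∈ s then Real.log p else 0 := by
      intro s hs
      rw [Finset.mem_powersetCard] at hs
      rw [Finset.sum_ite_mem, Finset.inter_eq_right.mpr hs.1]
    rw [Finset.sum_congr rfl inner, Finset.sum_comm]
    apply Finset.sum_congr rfl
    intro p hp
    rw [Finset.sum_ite, Finset.sum_const, Finset.sum_const_zero, add_zero,
      count_pairs hp, nsmul_eq_mul]
    congr 1
    have : 1 ≤ S.card := hcard ▸ hr
    push_cast [Nat.cast_sub this]
    ring
  rw [step3, Finset.mul_sum]
  apply Finset.sum_congr rfl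
  intro p _
  rw [hcard]
end
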